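/- For every weighted digraph D on a finite vertex set V, mac(UG(D))/2 ≤ mac(D) ≤ (mac(UG(D)) + r⁺(D))/2. -/
import Mathlib


open scoped BigOperators Classical

noncomputable section

namespace PaperStmt

variable {V : Type*} [Fintype V]

/-- Total weight of a weighted digraph given by `w : V → V → ℝ`. -/
def totalWeight (w : V → V → ℝ) : ℝ := ∑ u, ∑ v, w u v

/-- Weight of the dicut `(X, Xᶜ)`. -/
def cutWeight (w : V → V → ℝ) (X : Finset V) : ℝ := ∑ x ∈ X, ∑ y ∈ Xᶜ, w x y

/-- Maximum weight of a directed cut. -/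
def mac (w : V → V → ℝ) : ℝ :=
  Finset.univ.sup' ⟨∅, Finset.mem_univ ∅⟩ (fun X : Finset V => cutWeight w X)

/-- `r(v) = w⁺(v) - w⁻(v)`. -/
def rv (w : V → V → ℝ) (v : V) : ℝ := (∑ u, w v u) - (∑ u, w u v)

/-- `r⁺(D) = ∑_{v : r(v) > 0} r(v)`. -/
def rPlus (w : V → V → ℝ) : ℝ :=
  ∑ v ∈ Finset.univ.filter (fun v => 0 < rv w v), rv w v

/-- Maximum weight of a cut in the underlying weighted graph `UG(D)`,
where the edge `{x,y}` has weight `w x y + w y x`. -/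
def macUG (w : V → V → ℝ) : ℝ :=
  Finset.univ.sup' ⟨∅, Finset.mem_univ ∅⟩
    (fun X : Finset V => ∑ x ∈ X, ∑ y ∈ Xᶜ, (w x y + w y x))

lemma cutWeight_compl (w : V → V → ℝ) (X : Finset V) :
    cutWeight w Xᶜ = ∑ x ∈ X, ∑ y ∈ Xᶜ, w y x := by
  unfold cutWeight
  rw [compl_compl, Finset.sum_comm]

lemma ug_decomp (w : V → V → ℝ) (X : Finset V) :
    ∑ x ∈ X, ∑ y ∈ Xᶜ, (w x y + w y x) = cutWeight w X + cutWeight w Xᶜ := by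
  rw [cutWeight_compl]
  unfold cutWeight
  rw [← Finset.sum_add_distrib]
  exact Finset.sum_congr rfl fun x _ => by rw [← Finset.sum_add_distrib]

lemma cut_sub (w : V → V → ℝ) (X : Finset V) :
    cutWeight w X - cutWeight w Xᶜ = ∑ x ∈ X, rv w x := by
  rw [cutWeight_compl]
  unfold cutWeight rv
  have h1 : ∀ x, (∑ u, w x u) = ∑ u ∈ X, w x u + ∑ u ∈ Xᶜ, w x u := by
    intro x; rw [Finset.sum_add_sum_compl]
  have h2 : ∀ x, (∑ u, w u x) = ∑ u ∈ X, w u x + ∑ u ∈ Xᶜ, w u x := by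
    intro x; rw [Finset.sum_add_sum_compl]
  simp only [h1, h2, Finset.sum_sub_distrib, Finset.sum_add_distrib]
  rw [Finset.sum_comm (s := X) (t := X) (f := fun x u => w u x)]
  ring

lemma sum_rv_le_rPlus (w : V → V → ℝ) (S : Finset V) :
    ∑ x ∈ S, rv w x ≤ rPlus w := by
  have h1 : ∑ x ∈ S, rv w x ≤ ∑ x ∈ S.filter (fun v => 0 < rv w v), rv w x := by
    rw [← Finset.sum_filter_add_sum_filter_not S (fun v => 0 < rv w v)]
    have : ∑ x ∈ S.filter (fun v => ¬ 0 < rv w v), rv w x ≤ 0 :=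
      Finset.sum_nonpos fun x hx => le_of_not_gt (Finset.mem_filter.mp hx).2
    linarith
  refine h1.trans (Finset.sum_le_sum_of_subset_of_nonneg ?_ ?_)
  · exact Finset.filter_subset_filter _ (Finset.subset_univ S)
  · intro i hi _; exact le_of_lt (Finset.mem_filter.mp hi).2

theorem macUG_bounds {V : Type*} [Fintype V] [Nonempty V]
    (w : V → V → ℝ) (hnn : ∀ u v, 0 ≤ w u v) (hdiag : ∀ v, w v v = 0) :
    macUG w / 2 ≤ mac w ∧ mac w ≤ (macUG w + rPlus w) / 2 := by
  constructor
  · rw [div_le_iff₀ (by norm_num : (0:ℝ) < 2)]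
    apply Finset.sup'_le
    intro X _
    rw [ug_decomp]
    have h1 : cutWeight w X ≤ mac w := Finset.le_sup' _ (Finset.mem_univ X)
    have h2 : cutWeight w Xᶜ ≤ mac w := Finset.le_sup' _ (Finset.mem_univ Xᶜ)
    linarith
  · apply Finset.sup'_le
    intro X _
    have hug : ∑ x ∈ X, ∑ y ∈ Xᶜ, (w x y + w y x) ≤ macUG w :=
      Finset.le_sup' (fun X : Finset V => ∑ x ∈ X, ∑ y ∈ Xᶜ, (w x y + w y x))
        (Finset.mem_univ X)
    rw [ug_decomp] at hug
    have hr : cutWeight w X - cutWeight w Xᶜ ≤ rPlus w := by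
      rw [cut_sub]; exact sum_rv_le_rPlus w X
    linarith

end PaperStmt
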